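/- arXiv:1709.02234 — 2 statements merged into one kernel-verified Lean document; each statement's English description precedes it below -/
import Mathlib

section
/- Let j satisfy (H1), (H2), (H3) and let φ : [0,2π] → ℝ be continuous. Fix μ < 0 and define K(λ) = ∫₀^{2π}∫_ℝ (j')⁻¹( ((v²/2 + φ(θ) − λ)/μ)₊ ) dv dθ. Then K is strictly increasing on [min φ, +∞), K(λ) = 0 for λ ≤ min φ, lim_{λ → (min φ)⁺} K(λ) = 0, and lim_{λ→+∞} K(λ) = +∞. Consequently, for every M₁ > 0 there exists a unique λ > min φ with K(λ) = M₁. -/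
set_option maxHeartbeats 1000000

open Real Filter

section FAux

open MeasureTheory

variable {g : ℝ → ℝ} {c : ℝ}

private lemma g_nonneg (hg_mono : Monotone g) (hg_zero : ∀ x ≤ (0:ℝ), g x = 0) (x : ℝ) :
    0 ≤ g x := by
  rcases le_or_gt x 0 with h | h
  · rw [hg_zero x h]
  · rw [← hg_zero 0 le_rfl]; exact hg_mono h.le

private lemma F_integrand_zero (hg_zero : ∀ x ≤ (0:ℝ), g x = 0) (hc : 0 < c) {a v : ℝ}
    (h : a - v ^ 2 / 2 ≤ 0) : g ((a - v ^ 2 / 2) / c) = 0 :=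
  hg_zero _ (div_nonpos_of_nonpos_of_nonneg h hc.le)

private lemma F_integrable (hg_cont : Continuous g) (hg_zero : ∀ x ≤ (0:ℝ), g x = 0)
    (hc : 0 < c) (a : ℝ) :
    Integrable (fun v : ℝ => g ((a - v ^ 2 / 2) / c)) := by
  apply Continuous.integrable_of_hasCompactSupport
  · exact hg_cont.comp ((continuous_const.sub ((continuous_pow 2).div_const 2)).div_const c)
  · set R : ℝ := Real.sqrt (2 * |a| + 1) with hR
    apply HasCompactSupport.intro (isCompact_Icc (a := -R) (b := R))
    intro v hv
    simp only [Set.mem_Icc, not_and_or, not_le] at hv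
    have hRnn : 0 ≤ R := Real.sqrt_nonneg _
    have hR2 : R ^ 2 = 2 * |a| + 1 := Real.sq_sqrt (by positivity)
    have hv2 : 2 * |a| + 1 < v ^ 2 := by
      rcases hv with h | h
      · nlinarith
      · nlinarith
    apply F_integrand_zero hg_zero hc
    have := le_abs_self a
    linarith

private lemma F_zero (hg_zero : ∀ x ≤ (0:ℝ), g x = 0) (hc : 0 < c) {a : ℝ} (ha : a ≤ 0) :
    (∫ v : ℝ, g ((a - v ^ 2 / 2) / c)) = 0 := by
  have : (fun v : ℝ => g ((a - v ^ 2 / 2) / c)) = fun _ => (0:ℝ) := by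
    funext v
    exact F_integrand_zero hg_zero hc (by nlinarith [sq_nonneg v])
  rw [this, integral_zero]

private lemma F_mono (hg_cont : Continuous g) (hg_mono : Monotone g)
    (hg_zero : ∀ x ≤ (0:ℝ), g x = 0) (hc : 0 < c) :
    Monotone (fun a => ∫ v : ℝ, g ((a - v ^ 2 / 2) / c)) := by
  intro a b hab
  apply integral_mono (F_integrable hg_cont hg_zero hc a) (F_integrable hg_cont hg_zero hc b)
  intro v
  exact hg_mono (by gcongr)

private lemma F_nonneg (hg_mono : Monotone g) (hg_zero : ∀ x ≤ (0:ℝ), g x = 0) (a : ℝ) :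
    0 ≤ ∫ v : ℝ, g ((a - v ^ 2 / 2) / c) :=
  integral_nonneg fun v => g_nonneg hg_mono hg_zero _

private lemma F_continuous (hg_cont : Continuous g) (hg_mono : Monotone g)
    (hg_zero : ∀ x ≤ (0:ℝ), g x = 0) (hc : 0 < c) :
    Continuous (fun a => ∫ v : ℝ, g ((a - v ^ 2 / 2) / c)) := by
  rw [continuous_iff_continuousAt]
  intro a₀
  apply continuousAt_of_dominated (bound := fun v => g ((|a₀| + 1 - v ^ 2 / 2) / c))
  · filter_upwards with a
    exact (hg_cont.comp
      ((continuous_const.sub ((continuous_pow 2).div_const 2)).div_const c)).aestronglyMeasurable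
  · filter_upwards [eventually_le_nhds (show a₀ < |a₀| + 1 by
      have := le_abs_self a₀; linarith)] with a ha
    filter_upwards with v
    rw [Real.norm_eq_abs, abs_of_nonneg (g_nonneg hg_mono hg_zero _)]
    exact hg_mono (by gcongr)
  · exact F_integrable hg_cont hg_zero hc _
  · filter_upwards with v
    exact (hg_cont.comp
      ((continuous_id.sub continuous_const).div_const c)).continuousAt

private lemma F_strict (hg_cont : Continuous g) (hg_mono : Monotone g)
    (hg_zero : ∀ x ≤ (0:ℝ), g x = 0) (hg_smono : StrictMonoOn g (Set.Ici 0)) (hc : 0 < c)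
    {a b : ℝ} (ha : 0 ≤ a) (hab : a < b) :
    (∫ v : ℝ, g ((a - v ^ 2 / 2) / c)) < ∫ v : ℝ, g ((b - v ^ 2 / 2) / c) := by
  have hb : 0 < b := lt_of_le_of_lt ha hab
  have hint : Integrable (fun v : ℝ => g ((b - v ^ 2 / 2) / c) - g ((a - v ^ 2 / 2) / c)) :=
    (F_integrable hg_cont hg_zero hc b).sub (F_integrable hg_cont hg_zero hc a)
  have key : 0 < ∫ v : ℝ, (g ((b - v ^ 2 / 2) / c) - g ((a - v ^ 2 / 2) / c)) := by
    rw [integral_pos_iff_support_of_nonneg _ hint]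
    · apply lt_of_lt_of_le _ (measure_mono (show Set.Ioo (-(Real.sqrt (2 * b)))
        (Real.sqrt (2 * b)) ⊆ _ from ?_))
      · rw [Real.volume_Ioo]
        apply ENNReal.ofReal_pos.mpr
        have : 0 < Real.sqrt (2 * b) := Real.sqrt_pos.mpr (by linarith)
        linarith
      · intro v hv
        have hv2 : v ^ 2 < 2 * b := by
          have h1 := hv.1
          have h2 := hv.2
          nlinarith [Real.sq_sqrt (show (0:ℝ) ≤ 2 * b by linarith)]
        have hy : 0 < (b - v ^ 2 / 2) / c := div_pos (by linarith) hc
        have hxy : (a - v ^ 2 / 2) / c < (b - v ^ 2 / 2) / c := by gcongr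
        have hlt : g ((a - v ^ 2 / 2) / c) < g ((b - v ^ 2 / 2) / c) := by
          rcases le_or_gt ((a - v ^ 2 / 2) / c) 0 with h | h
          · rw [hg_zero _ h, ← hg_zero 0 le_rfl]
            exact hg_smono (Set.mem_Ici.mpr le_rfl) (Set.mem_Ici.mpr hy.le) hy
          · exact hg_smono (Set.mem_Ici.mpr h.le) (Set.mem_Ici.mpr hy.le) hxy
        simp only [Function.mem_support]
        exact sub_ne_zero.mpr hlt.ne'
    · intro v
      exact sub_nonneg.mpr (hg_mono (by gcongr))
  rw [integral_sub (F_integrable hg_cont hg_zero hc b) (F_integrable hg_cont hg_zero hc a)]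
    at key
  linarith

private lemma F_top (hg_cont : Continuous g) (hg_mono : Monotone g)
    (hg_zero : ∀ x ≤ (0:ℝ), g x = 0) (hg_top : Tendsto g atTop atTop) (hc : 0 < c) :
    Tendsto (fun a => ∫ v : ℝ, g ((a - v ^ 2 / 2) / c)) atTop atTop := by
  have hlow : ∀ a : ℝ, 2 * g ((a - 1 / 2) / c) ≤ ∫ v : ℝ, g ((a - v ^ 2 / 2) / c) := by
    intro a
    have h1 : ∫ _ : ℝ in Set.Icc (-1 : ℝ) 1, g ((a - 1 / 2) / c)
        ≤ ∫ v : ℝ in Set.Icc (-1 : ℝ) 1, g ((a - v ^ 2 / 2) / c) := by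
      apply setIntegral_mono_on ((integrableOn_const_iff).mpr (Or.inr (by
        rw [Real.volume_Icc]; exact ENNReal.ofReal_lt_top)))
        ((F_integrable hg_cont hg_zero hc a).integrableOn) measurableSet_Icc
      intro v hv
      apply hg_mono
      have h1 := hv.1
      have h2 := hv.2
      have hv1 : a - 1 / 2 ≤ a - v ^ 2 / 2 := by nlinarith
      gcongr
    have h2 : ∫ v : ℝ in Set.Icc (-1 : ℝ) 1, g ((a - v ^ 2 / 2) / c)
        ≤ ∫ v : ℝ, g ((a - v ^ 2 / 2) / c) :=
      setIntegral_le_integral (F_integrable hg_cont hg_zero hc a)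
        (Eventually.of_forall fun v => g_nonneg hg_mono hg_zero _)
    rw [setIntegral_const, Real.volume_real_Icc] at h1
    have h3 : max (1 - (-1 : ℝ)) 0 = 2 := by
      norm_num
    rw [h3] at h1
    calc 2 * g ((a - 1 / 2) / c) = (2 : ℝ) • g ((a - 1 / 2) / c) := by simp
    _ ≤ _ := le_trans h1 h2
  apply tendsto_atTop_mono hlow
  exact Tendsto.const_mul_atTop (by norm_num : (0:ℝ) < 2)
    (hg_top.comp (Tendsto.atTop_div_const hc
      ((tendsto_atTop_add_const_right atTop (-(1/2)) tendsto_id).congr (fun x => by simp [id_eq]; try ring))))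

end FAux

/-- Properties of `K(λ) = ∬ (j')⁻¹( ((v²/2 + φ(θ) − λ)/μ)₊ )` and existence/uniqueness of the
Lagrange multiplier `λ` realizing a prescribed mass `M₁`. -/
theorem K_properties_and_unique_multiplier
    (j : ℝ → ℝ) (p q : ℝ) (jinv : ℝ → ℝ) (φ : ℝ → ℝ) (μ m : ℝ) (K : ℝ → ℝ)
    (hC2 : ContDiffOn ℝ 2 j (Set.Ioi 0))
    (hj0 : j 0 = 0) (hj'0 : deriv j 0 = 0)
    (hj'' : ∀ t > 0, 0 < deriv (deriv j) t)
    (hH2 : Tendsto (fun t => j t / t) atTop atTop)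
    (hp : 1 < p) (hq : 1 < q)
    (hH3 : ∀ s > 0, p ≤ s * deriv j s / j s ∧ s * deriv j s / j s ≤ q)
    (hjinv_nonneg : ∀ t ≥ (0:ℝ), 0 ≤ jinv t)
    (hjinv_right : ∀ t ≥ (0:ℝ), deriv j (jinv t) = t)
    (hjinv_left : ∀ s ≥ (0:ℝ), jinv (deriv j s) = s)
    (hφ : ContinuousOn φ (Set.Icc 0 (2 * π)))
    (hμ : μ < 0)
    (hm : IsLeast (φ '' Set.Icc 0 (2 * π)) m)
    (hK : ∀ lam, K lam =
      ∫ θ in (0)..(2 * π), ∫ v : ℝ, jinv (max ((v ^ 2 / 2 + φ θ - lam) / μ) 0)) :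
    StrictMonoOn K (Set.Ici m) ∧
    (∀ lam ≤ m, K lam = 0) ∧
    Tendsto K (nhdsWithin m (Set.Ioi m)) (nhds 0) ∧
    Tendsto K atTop atTop ∧
    ∀ M₁ > (0:ℝ), ∃! lam : ℝ, m < lam ∧ K lam = M₁ := by
  -- basic facts about `deriv j` and `jinv`
  have hj'cont : ContinuousOn (deriv j) (Set.Ioi 0) :=
    hC2.continuousOn_deriv_of_isOpen isOpen_Ioi (by norm_num)
  have hj'smono : StrictMonoOn (deriv j) (Set.Ioi 0) := by
    apply strictMonoOn_of_deriv_pos (convex_Ioi 0) hj'cont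
    intro x hx
    rw [interior_Ioi] at hx
    exact hj'' x hx
  have hjinv0 : jinv 0 = 0 := by
    have h := hjinv_left 0 le_rfl
    rwa [hj'0] at h
  have hj'ne : ∀ s > (0:ℝ), deriv j s ≠ 0 := by
    intro s hs h
    have h2 := hjinv_left s hs.le
    rw [h, hjinv0] at h2
    exact hs.ne h2
  have hjinv1pos : 0 < jinv 1 := by
    rcases (hjinv_nonneg 1 zero_le_one).lt_or_eq with h | h
    · exact h
    · exfalso
      have h2 := hjinv_right 1 zero_le_one
      rw [← h, hj'0] at h2
      norm_num at h2
  have hj'pos : ∀ s > (0:ℝ), 0 < deriv j s := by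
    intro s hs
    rcases lt_trichotomy (deriv j s) 0 with h | h | h
    · exfalso
      have hd1 : deriv j (jinv 1) = 1 := hjinv_right 1 zero_le_one
      have hcont : ContinuousOn (deriv j) (Set.uIcc s (jinv 1)) := by
        apply hj'cont.mono
        intro x hx
        rcases Set.mem_uIcc.mp hx with ⟨h1, _⟩ | ⟨h1, _⟩
        · exact lt_of_lt_of_le hs h1
        · exact lt_of_lt_of_le hjinv1pos h1
      have h0mem : (0:ℝ) ∈ Set.uIcc (deriv j s) (deriv j (jinv 1)) := by
        rw [hd1]
        exact Set.mem_uIcc.mpr (Or.inl ⟨h.le, zero_le_one⟩)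
      obtain ⟨x, hx, hdx⟩ := intermediate_value_uIcc hcont h0mem
      have hxpos : 0 < x := by
        rcases Set.mem_uIcc.mp hx with ⟨h1, _⟩ | ⟨h1, _⟩
        · exact lt_of_lt_of_le hs h1
        · exact lt_of_lt_of_le hjinv1pos h1
      exact hj'ne x hxpos hdx
    · exact absurd h (hj'ne s hs)
    · exact h
  have hj'nonneg : ∀ s ≥ (0:ℝ), 0 ≤ deriv j s := by
    intro s hs
    rcases hs.lt_or_eq with h | h
    · exact (hj'pos s h).le
    · rw [← h, hj'0]
  have hj'smono' : StrictMonoOn (deriv j) (Set.Ici 0) := by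
    intro x hx y hy hxy
    rcases (Set.mem_Ici.mp hx).lt_or_eq with h | h
    · exact hj'smono h (lt_trans h hxy) hxy
    · rw [← h, hj'0]
      exact hj'pos y (by rw [← h] at hxy; exact hxy)
  have hjinv_smono : StrictMonoOn jinv (Set.Ici 0) := by
    intro x hx y hy hxy
    have h := hj'smono'.lt_iff_lt (Set.mem_Ici.mpr (hjinv_nonneg x hx))
      (Set.mem_Ici.mpr (hjinv_nonneg y hy))
    rw [hjinv_right x hx, hjinv_right y hy] at h
    exact h.mp hxy
  have hjinv_mono : MonotoneOn jinv (Set.Ici 0) := hjinv_smono.monotoneOn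
  -- the function `g x = jinv (max x 0)`
  set g : ℝ → ℝ := fun x => jinv (max x 0) with hgdef
  have hg_zero : ∀ x ≤ (0:ℝ), g x = 0 := by
    intro x hx
    simp only [hgdef, max_eq_right hx, hjinv0]
  have hg_mono : Monotone g := by
    intro x y hxy
    exact hjinv_mono (Set.mem_Ici.mpr (le_max_right x 0)) (Set.mem_Ici.mpr (le_max_right y 0))
      (max_le_max hxy le_rfl)
  have hg_smono : StrictMonoOn g (Set.Ici 0) := by
    intro x hx y hy hxy
    simp only [hgdef, max_eq_left (Set.mem_Ici.mp hx), max_eq_left (Set.mem_Ici.mp hy)]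
    exact hjinv_smono hx hy hxy
  have hgt : Continuous (fun x => jinv (max x 0) + min x 0) := by
    apply Monotone.continuous_of_surjective
    · intro x y hxy
      exact add_le_add
        (hjinv_mono (Set.mem_Ici.mpr (le_max_right x 0)) (Set.mem_Ici.mpr (le_max_right y 0))
          (max_le_max hxy le_rfl))
        (min_le_min hxy le_rfl)
    · intro y
      rcases le_or_gt 0 y with hy | hy
      · refine ⟨deriv j y, ?_⟩
        have h1 : 0 ≤ deriv j y := hj'nonneg y hy
        show jinv (max (deriv j y) 0) + min (deriv j y) 0 = y
        rw [max_eq_left h1, min_eq_right h1, hjinv_left y hy, add_zero]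
      · refine ⟨y, ?_⟩
        show jinv (max y 0) + min y 0 = y
        rw [max_eq_right hy.le, min_eq_left hy.le, hjinv0, zero_add]
  have hg_cont : Continuous g := by
    have h : g = fun x => (jinv (max x 0) + min x 0) - min x 0 := by
      funext x; simp [hgdef]
    rw [h]
    exact hgt.sub (continuous_id.min continuous_const)
  have hg_top : Tendsto g atTop atTop := by
    rw [tendsto_atTop_atTop]
    intro b
    refine ⟨deriv j (max b 0), fun x hx => ?_⟩
    have hb0 : (0:ℝ) ≤ max b 0 := le_max_right _ _
    have hd0 : 0 ≤ deriv j (max b 0) := hj'nonneg _ hb0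
    calc b ≤ max b 0 := le_max_left _ _
    _ = jinv (deriv j (max b 0)) := (hjinv_left _ hb0).symm
    _ ≤ jinv (max x 0) := hjinv_mono (Set.mem_Ici.mpr hd0)
        (Set.mem_Ici.mpr (le_max_right x 0)) (le_trans hx (le_max_left x 0))
    _ = g x := rfl
  -- setup F
  have hc : (0:ℝ) < -μ := neg_pos.mpr hμ
  have hπ : (0:ℝ) < 2 * π := by positivity
  set F : ℝ → ℝ := fun a => ∫ v : ℝ, g ((a - v ^ 2 / 2) / (-μ)) with hFdef
  have Fz : ∀ a ≤ (0:ℝ), F a = 0 := by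
    intro a ha
    simp only [hFdef]
    exact F_zero hg_zero hc ha
  have Fm : ∀ a b : ℝ, a ≤ b → F a ≤ F b := by
    intro a b hab
    simp only [hFdef]
    exact F_mono hg_cont hg_mono hg_zero hc hab
  have Fc : Continuous F := by
    rw [hFdef]
    exact F_continuous hg_cont hg_mono hg_zero hc
  have Fs : ∀ a b : ℝ, 0 ≤ a → a < b → F a < F b := by
    intro a b ha hab
    simp only [hFdef]
    exact F_strict hg_cont hg_mono hg_zero hg_smono hc ha hab
  have Ftop : Tendsto F atTop atTop := by
    rw [hFdef]
    exact F_top hg_cont hg_mono hg_zero hg_top hc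
  have Fnn : ∀ a : ℝ, 0 ≤ F a := by
    intro a
    simp only [hFdef]
    exact F_nonneg hg_mono hg_zero a
  -- rewrite K via F
  have hKF : ∀ lam, K lam = ∫ θ in (0)..(2 * π), F (lam - φ θ) := by
    intro lam
    rw [hK lam]
    congr 1
    funext θ
    simp only [hFdef]
    congr 1
    funext v
    have h : (lam - φ θ - v ^ 2 / 2) / (-μ) = (v ^ 2 / 2 + φ θ - lam) / μ := by
      rw [show lam - φ θ - v ^ 2 / 2 = -(v ^ 2 / 2 + φ θ - lam) by ring, neg_div_neg_eq]
    simp only [hgdef, h]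
  have contOn : ∀ lam, ContinuousOn (fun θ => F (lam - φ θ)) (Set.Icc 0 (2 * π)) :=
    fun lam => Fc.comp_continuousOn (continuousOn_const.sub hφ)
  have hII : ∀ lam, IntervalIntegrable (fun θ => F (lam - φ θ))
      MeasureTheory.volume 0 (2 * π) := by
    intro lam
    apply ContinuousOn.intervalIntegrable
    rw [Set.uIcc_of_le hπ.le]
    exact contOn lam
  have hφm : ∀ θ ∈ Set.Icc (0:ℝ) (2 * π), m ≤ φ θ := fun θ hθ => hm.2 ⟨θ, hθ, rfl⟩
  -- Part 1: strict monotonicity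
  obtain ⟨θ₀, hθ₀, hφθ₀⟩ := hm.1
  have part1 : StrictMonoOn K (Set.Ici m) := by
    intro lam hlam lam' hlam' hlt
    rw [hKF lam, hKF lam']
    apply intervalIntegral.integral_lt_integral_of_continuousOn_of_le_of_exists_lt hπ
      (contOn lam) (contOn lam')
    · intro θ _
      exact Fm _ _ (by linarith)
    · refine ⟨θ₀, hθ₀, ?_⟩
      rw [hφθ₀]
      exact Fs _ _ (sub_nonneg.mpr (Set.mem_Ici.mp hlam)) (by linarith)
  -- Part 2: K = 0 below m
  have part2 : ∀ lam ≤ m, K lam = 0 := by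
    intro lam hlam
    rw [hKF lam]
    rw [intervalIntegral.integral_congr (g := fun _ => (0:ℝ)) ?_]
    · simp
    · intro θ hθ
      rw [Set.uIcc_of_le hπ.le] at hθ
      exact Fz _ (by linarith [hφm θ hθ])
  -- upper and lower bounds for K
  have hlb0 : ∀ lam, 0 ≤ K lam := by
    intro lam
    rw [hKF lam]
    exact intervalIntegral.integral_nonneg hπ.le fun θ _ => Fnn _
  have hub : ∀ lam, K lam ≤ (2 * π) * F (lam - m) := by
    intro lam
    rw [hKF lam]
    have hstep := intervalIntegral.integral_mono_on (μ := MeasureTheory.volume)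
      (f := fun θ => F (lam - φ θ)) (g := fun _ => F (lam - m))
      hπ.le (hII lam) intervalIntegrable_const
      (fun θ hθ => Fm _ _ (by linarith [hφm θ hθ]))
    rw [intervalIntegral.integral_const, smul_eq_mul] at hstep
    calc (∫ θ in (0)..(2 * π), F (lam - φ θ)) ≤ (2 * π - 0) * F (lam - m) := hstep
    _ = (2 * π) * F (lam - m) := by ring
  -- Part 3: limit at m from the right
  have part3 : Tendsto K (nhdsWithin m (Set.Ioi m)) (nhds 0) := by
    have h1 : Tendsto (fun lam : ℝ => lam - m) (nhdsWithin m (Set.Ioi m)) (nhds 0) := by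
      have h : Tendsto (fun lam : ℝ => lam - m) (nhds m) (nhds (m - m)) :=
        (continuous_sub_right m).tendsto m
      rw [sub_self] at h
      exact h.mono_left nhdsWithin_le_nhds
    have h2 : Tendsto (fun lam : ℝ => F (lam - m)) (nhdsWithin m (Set.Ioi m)) (nhds (F 0)) :=
      (Fc.tendsto 0).comp h1
    rw [Fz 0 le_rfl] at h2
    have h3 := h2.const_mul (2 * π)
    rw [mul_zero] at h3
    exact tendsto_of_tendsto_of_tendsto_of_le_of_le tendsto_const_nhds h3
      (fun lam => hlb0 lam) (fun lam => hub lam)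
  -- Part 4: K tends to infinity
  obtain ⟨θ₁, hθ₁, hmax⟩ := isCompact_Icc.exists_isMaxOn
    (Set.nonempty_Icc.mpr hπ.le) hφ
  have hlbB : ∀ lam, (2 * π) * F (lam - φ θ₁) ≤ K lam := by
    intro lam
    rw [hKF lam]
    have hstep := intervalIntegral.integral_mono_on (μ := MeasureTheory.volume)
      (f := fun _ => F (lam - φ θ₁)) (g := fun θ => F (lam - φ θ))
      hπ.le intervalIntegrable_const (hII lam)
      (fun θ hθ => Fm _ _ (by
        have := hmax hθ
        simp only [Set.mem_setOf_eq] at this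
        linarith))
    rw [intervalIntegral.integral_const, smul_eq_mul] at hstep
    calc (2 * π) * F (lam - φ θ₁) = (2 * π - 0) * F (lam - φ θ₁) := by ring
    _ ≤ _ := hstep
  have part4 : Tendsto K atTop atTop := by
    apply tendsto_atTop_mono hlbB
    apply Tendsto.const_mul_atTop hπ
    have hinner : Tendsto (fun lam : ℝ => lam - φ θ₁) atTop atTop :=
      (tendsto_atTop_add_const_right atTop (-(φ θ₁)) tendsto_id).congr
        (fun x => by simp [id_eq]; ring)
    exact Ftop.comp hinner
  -- continuity of K
  have hKcont : Continuous K := by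
    have h : Continuous (fun lam => ∫ θ in (0)..(2 * π), F (lam - φ θ)) := by
      rw [continuous_iff_continuousAt]
      intro lam₀
      apply intervalIntegral.continuousAt_of_dominated_interval
        (bound := fun _ => F (lam₀ + 1 - m))
      · filter_upwards with lam
        apply ContinuousOn.aestronglyMeasurable _ (by
          rw [Set.uIoc_of_le hπ.le]; exact measurableSet_Ioc)
        rw [Set.uIoc_of_le hπ.le]
        exact (contOn lam).mono Set.Ioc_subset_Icc_self
      · filter_upwards [eventually_le_nhds (lt_add_one lam₀)] with lam hlam
        filter_upwards with θ hθ
        rw [Set.uIoc_of_le hπ.le] at hθ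
        have hmθ : m ≤ φ θ := hφm θ (Set.Ioc_subset_Icc_self hθ)
        rw [Real.norm_eq_abs, abs_of_nonneg (Fnn _)]
        exact Fm _ _ (by linarith)
      · exact intervalIntegrable_const
      · filter_upwards with θ _
        exact (Fc.comp (continuous_sub_right (φ θ))).continuousAt
    have hKeq : K = fun lam => ∫ θ in (0)..(2 * π), F (lam - φ θ) := funext hKF
    rw [hKeq]
    exact h
  -- Part 5: existence and uniqueness
  refine ⟨part1, part2, part3, part4, ?_⟩
  intro M₁ hM₁
  have hKm : K m = 0 := part2 m le_rfl
  obtain ⟨R, hR1, hR2⟩ : ∃ R, m < R ∧ M₁ < K R := by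
    obtain ⟨R, h1, h2⟩ := ((part4.eventually_gt_atTop M₁).and (eventually_gt_atTop m)).exists
    exact ⟨R, h2, h1⟩
  obtain ⟨lam, hlam_mem, hlam_eq⟩ := intermediate_value_Icc hR1.le hKcont.continuousOn
    (show M₁ ∈ Set.Icc (K m) (K R) by rw [hKm]; exact ⟨hM₁.le, hR2.le⟩)
  have hlam_gt : m < lam := by
    rcases (hlam_mem.1).lt_or_eq with h | h
    · exact h
    · exfalso
      rw [← h, hKm] at hlam_eq
      linarith
  refine ⟨lam, ⟨hlam_gt, hlam_eq⟩, ?_⟩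
  rintro y ⟨hy1, hy2⟩
  exact part1.injOn (Set.mem_Ici.mpr hy1.le) (Set.mem_Ici.mpr hlam_gt.le)
    (by rw [hy2, hlam_eq])
end

section
/- Let j satisfy (H1)–(H2) or j(t) = t ln t, and let M > 0. Then the infimum I(M) = inf{ H(f) + ∬ j(f) : f ∈ E_j, ‖f‖_{L¹} = M } is finite; more precisely, for every admissible f, H(f) + ∬ j(f) ≥ −π ‖W'‖²_{L∞} M² + c(M), where c(M) = 0 if j ≥ 0 (case (H1)-(H2)) and c(M) = M(ln M − ln ∬ e^{−v²/2} dθ dv) if j(t) = t ln t. -/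
open Real MeasureTheory

lemma entropy_pointwise {t s : ℝ} (ht : 0 ≤ t) (hs : 0 < s) :
    t * Real.log s + t - s ≤ t * Real.log t := by
  rcases eq_or_lt_of_le ht with h | h
  · simp only [← h, zero_mul, add_zero, zero_add, zero_sub]
    linarith
  · have h1 := Real.log_le_sub_one_of_pos (show 0 < s / t by positivity)
    rw [Real.log_div hs.ne' h.ne'] at h1
    have h2 : t * (Real.log s - Real.log t) ≤ t * (s / t - 1) :=
      mul_le_mul_of_nonneg_left h1 h.le
    have h3 : t * (s / t) = s := by field_simp
    nlinarith [h2, h3]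

/-- Lower bound on the energy–Casimir functional: for every admissible `f` of mass `M`,
`H(f) + ∬ j(f) ≥ −π ‖W'‖²_{L∞} M² + c(M)`, with `c(M) = 0` when `j ≥ 0` and
`c(M) = M(ln M − ln ∬ e^{−v²/2})` when `j(t) = t ln t`. In particular `I(M) > −∞`. -/
theorem energy_casimir_lower_bound (j : ℝ → ℝ) (W' : ℝ → ℝ) (CW' : ℝ) (M Z c : ℝ)
    (f : ℝ × ℝ → ℝ) (ρ φd : ℝ → ℝ)
    (hW'bdd : ∀ x, |W' x| ≤ CW') (hCW' : 0 ≤ CW')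
    (hZ : Z = ∫ p in Set.Icc 0 (2 * π) ×ˢ (Set.univ : Set ℝ), Real.exp (-p.2 ^ 2 / 2))
    (hcase : ((∀ t ≥ (0:ℝ), 0 ≤ j t) ∧ c = 0) ∨
      ((j = fun t => t * Real.log t) ∧ c = M * (Real.log M - Real.log Z)))
    (hf0 : ∀ p, 0 ≤ f p)
    (hfint : IntegrableOn (fun p => (1 + p.2 ^ 2) * f p)
      (Set.Icc 0 (2 * π) ×ˢ (Set.univ : Set ℝ)))
    (hjfint : IntegrableOn (fun p => j (f p)) (Set.Icc 0 (2 * π) ×ˢ (Set.univ : Set ℝ)))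
    (hM : 0 < M)
    (hmass : (∫ p in Set.Icc 0 (2 * π) ×ˢ (Set.univ : Set ℝ), f p) = M)
    (hρ : ∀ θ', ρ θ' = ∫ v, f (θ', v))
    (hφd : ∀ θ, φd θ = ∫ θ' in (0)..(2 * π), W' (θ - θ') * ρ θ') :
    -π * CW' ^ 2 * M ^ 2 + c ≤
      (∫ p in Set.Icc 0 (2 * π) ×ˢ (Set.univ : Set ℝ), p.2 ^ 2 / 2 * f p) -
        (1 / 2) * (∫ θ in (0)..(2 * π), (φd θ) ^ 2) +
        ∫ p in Set.Icc 0 (2 * π) ×ˢ (Set.univ : Set ℝ), j (f p) := by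
  set S : Set (ℝ × ℝ) := Set.Icc 0 (2 * π) ×ˢ (Set.univ : Set ℝ) with hS
  have hSmeas : MeasurableSet S := measurableSet_Icc.prod MeasurableSet.univ
  have h2π : (0:ℝ) ≤ 2 * π := by positivity
  have hrestrict : (volume : Measure (ℝ × ℝ)).restrict S
      = ((volume.restrict (Set.Icc 0 (2 * π))).prod (volume : Measure ℝ)) := by
    rw [hS, Measure.volume_eq_prod, ← Measure.prod_restrict, Measure.restrict_univ]
  -- measurability and integrability of f
  have hfmeas : AEStronglyMeasurable f (volume.restrict S) := by
    have h1 := hfint.aestronglyMeasurable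
    have h2 : Continuous fun p : ℝ × ℝ => (1 + p.2 ^ 2)⁻¹ :=
      (continuous_const.add ((continuous_snd.pow 2))).inv₀ (fun p => (show (0:ℝ) < 1 + p.2 ^ 2 by positivity).ne')
    have h3 := (h2.aestronglyMeasurable (μ := volume.restrict S)).mul h1
    refine h3.congr (ae_of_all _ fun p => ?_)
    have : (1 : ℝ) + p.2 ^ 2 ≠ 0 := by positivity
    simp only [Pi.mul_apply]
    field_simp
  have hfL1 : IntegrableOn f S := by
    refine hfint.integrable.mono hfmeas (ae_of_all _ fun p => ?_)
    have h1 : (0:ℝ) ≤ f p := hf0 p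
    have h2 : f p ≤ (1 + p.2 ^ 2) * f p := by nlinarith [sq_nonneg p.2]
    simp only [Real.norm_eq_abs, abs_of_nonneg h1, abs_of_nonneg (le_trans h1 h2)]
    exact h2
  have hkin : IntegrableOn (fun p => p.2 ^ 2 / 2 * f p) S := by
    have hm : AEStronglyMeasurable (fun p : ℝ × ℝ => p.2 ^ 2 / 2 * f p)
        (volume.restrict S) :=
      ((continuous_snd.pow 2).div_const 2).aestronglyMeasurable.mul hfmeas
    refine hfint.integrable.mono hm (ae_of_all _ fun p => ?_)
    have h1 : (0:ℝ) ≤ f p := hf0 p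
    have h2 : p.2 ^ 2 / 2 * f p ≤ (1 + p.2 ^ 2) * f p := by nlinarith [sq_nonneg p.2]
    have h0 : (0:ℝ) ≤ p.2 ^ 2 / 2 * f p := mul_nonneg (by positivity) h1
    simp only [Real.norm_eq_abs, abs_of_nonneg h0, abs_of_nonneg (le_trans h0 h2)]
    exact h2
  -- Fubini: mass of ρ
  have hfprod : Integrable f ((volume.restrict (Set.Icc 0 (2 * π))).prod volume) := by
    rw [← hrestrict]; exact hfL1
  have hρeq : ρ = fun θ' => ∫ v, f (θ', v) := funext hρ
  have hρint : Integrable ρ (volume.restrict (Set.Icc 0 (2 * π))) := by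
    rw [hρeq]; exact hfprod.integral_prod_left
  have hρ0 : ∀ θ', 0 ≤ ρ θ' := fun θ' => (hρ θ') ▸ integral_nonneg (fun v => hf0 _)
  have hρmass : (∫ θ' in Set.Icc 0 (2 * π), ρ θ') = M := by
    rw [hρeq, ← MeasureTheory.integral_prod f hfprod, ← hrestrict]
    exact hmass
  -- pointwise bound on φd
  have hφbdd : ∀ θ, |φd θ| ≤ CW' * M := by
    intro θ
    rw [hφd θ, intervalIntegral.integral_of_le h2π]
    have hρIoc : Integrable ρ (volume.restrict (Set.Ioc 0 (2 * π))) :=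
      hρint.mono_measure (Measure.restrict_mono Set.Ioc_subset_Icc_self le_rfl)
    have step1 : |∫ θ' in Set.Ioc 0 (2 * π), W' (θ - θ') * ρ θ'|
        ≤ ∫ θ' in Set.Ioc 0 (2 * π), |W' (θ - θ')| * |ρ θ'| := by
      simpa [Real.norm_eq_abs, abs_mul] using
        norm_integral_le_integral_norm (μ := volume.restrict (Set.Ioc 0 (2 * π)))
          (f := fun θ' => W' (θ - θ') * ρ θ')
    have step2 : (∫ θ' in Set.Ioc 0 (2 * π), |W' (θ - θ')| * |ρ θ'|)
        ≤ ∫ θ' in Set.Ioc 0 (2 * π), CW' * ρ θ' := by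
      refine integral_mono_of_nonneg
        (ae_of_all _ fun θ' => mul_nonneg (abs_nonneg _) (abs_nonneg _))
        (hρIoc.const_mul CW') (ae_of_all _ fun θ' => ?_)
      dsimp only
      rw [abs_of_nonneg (hρ0 θ')]
      exact mul_le_mul_of_nonneg_right (hW'bdd _) (hρ0 θ')
    have step3 : (∫ θ' in Set.Ioc 0 (2 * π), CW' * ρ θ') = CW' * M := by
      rw [integral_const_mul, ← integral_Icc_eq_integral_Ioc, hρmass]
    calc |∫ θ' in Set.Ioc 0 (2 * π), W' (θ - θ') * ρ θ'|
        ≤ ∫ θ' in Set.Ioc 0 (2 * π), |W' (θ - θ')| * |ρ θ'| := step1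
      _ ≤ ∫ θ' in Set.Ioc 0 (2 * π), CW' * ρ θ' := step2
      _ = CW' * M := step3
  -- bound on the potential energy term
  have hpot : (∫ θ in (0)..(2 * π), (φd θ) ^ 2) ≤ 2 * π * (CW' * M) ^ 2 := by
    rw [intervalIntegral.integral_of_le h2π]
    have hb : ∀ θ, (φd θ) ^ 2 ≤ (CW' * M) ^ 2 := by
      intro θ
      have := hφbdd θ
      nlinarith [abs_nonneg (φd θ), sq_abs (φd θ)]
    calc (∫ θ in Set.Ioc 0 (2 * π), (φd θ) ^ 2)
        ≤ ∫ _θ in Set.Ioc 0 (2 * π), (CW' * M) ^ 2 :=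
          integral_mono_of_nonneg (ae_of_all _ fun θ => sq_nonneg _)
            (integrableOn_const measure_Ioc_lt_top.ne)
            (ae_of_all _ hb)
      _ = 2 * π * (CW' * M) ^ 2 := by
          rw [setIntegral_const, Real.volume_real_Ioc_of_le h2π, sub_zero,
            smul_eq_mul]
  have hK0 : 0 ≤ ∫ p in S, p.2 ^ 2 / 2 * f p :=
    setIntegral_nonneg hSmeas (fun p _ => mul_nonneg (by positivity) (hf0 p))
  rcases hcase with ⟨hj1, hc⟩ | ⟨hjdef, hc⟩
  · -- nonnegative Casimir case
    have hJ0 : 0 ≤ ∫ p in S, j (f p) :=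
      setIntegral_nonneg hSmeas (fun p _ => hj1 _ (hf0 p))
    rw [hc]
    nlinarith [hpot, hK0, hJ0]
  · -- entropy case
    have hgauss : Integrable (fun p : ℝ × ℝ => Real.exp (-p.2 ^ 2 / 2))
        ((volume.restrict (Set.Icc 0 (2 * π))).prod volume) := by
      have h1 : Integrable (fun x : ℝ => Real.exp (-(1/2) * x ^ 2)) volume :=
        integrable_exp_neg_mul_sq (by norm_num)
      have h2 : Integrable (fun _ : ℝ => (1:ℝ))
          (volume.restrict (Set.Icc 0 (2 * π))) := integrable_const 1
      refine (h2.mul_prod h1).congr (ae_of_all _ fun p => ?_)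
      simp only [one_mul]
      congr 1
      ring
    have hinner : (∫ v : ℝ, Real.exp (-v ^ 2 / 2)) = Real.sqrt (2 * π) := by
      rw [show (fun v : ℝ => Real.exp (-v ^ 2 / 2))
          = fun v : ℝ => Real.exp (-(1/2) * v ^ 2) from funext fun v => by
            congr 1; ring]
      rw [integral_gaussian]
      congr 1
      ring
    have hZval : Z = 2 * π * Real.sqrt (2 * π) := by
      rw [hZ]
      show (∫ p in S, Real.exp (-p.2 ^ 2 / 2)) = _
      rw [show (∫ p in S, Real.exp (-p.2 ^ 2 / 2))
          = ∫ p, Real.exp (-p.2 ^ 2 / 2)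
              ∂((volume.restrict (Set.Icc 0 (2 * π))).prod volume) from by
            rw [← hrestrict]]
      rw [MeasureTheory.integral_prod _ hgauss]
      simp only [hinner]
      rw [setIntegral_const, Real.volume_real_Icc_of_le h2π, sub_zero,
        smul_eq_mul]
    have hZpos : 0 < Z := by
      rw [hZval]
      have : 0 < Real.sqrt (2 * π) := Real.sqrt_pos.2 (by positivity)
      positivity
    have hMZ : 0 < M / Z := div_pos hM hZpos
    have hgaussS : IntegrableOn (fun p : ℝ × ℝ => Real.exp (-p.2 ^ 2 / 2)) S := by
      rw [IntegrableOn, hrestrict]; exact hgauss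
    -- pointwise entropy inequality
    have hpt : ∀ p : ℝ × ℝ,
        Real.log (M / Z) * f p + f p - M / Z * Real.exp (-p.2 ^ 2 / 2)
          ≤ j (f p) + p.2 ^ 2 / 2 * f p := by
      intro p
      have hgp : 0 < M / Z * Real.exp (-p.2 ^ 2 / 2) :=
        mul_pos hMZ (Real.exp_pos _)
      have := entropy_pointwise (hf0 p) hgp
      rw [Real.log_mul hMZ.ne' (Real.exp_ne_zero _), Real.log_exp] at this
      rw [hjdef]
      dsimp only
      nlinarith [this]
    -- integrable lower bound
    have hLint : IntegrableOn (fun p : ℝ × ℝ =>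
        Real.log (M / Z) * f p + f p - M / Z * Real.exp (-p.2 ^ 2 / 2)) S :=
      ((hfL1.const_mul _).add hfL1).sub (hgaussS.const_mul _)
    have hRint : IntegrableOn (fun p : ℝ × ℝ => j (f p) + p.2 ^ 2 / 2 * f p) S :=
      hjfint.add hkin
    have hint_le : (∫ p in S,
        (Real.log (M / Z) * f p + f p - M / Z * Real.exp (-p.2 ^ 2 / 2)))
          ≤ ∫ p in S, (j (f p) + p.2 ^ 2 / 2 * f p) :=
      integral_mono hLint hRint (fun p => hpt p)
    have hLval : (∫ p in S,
        (Real.log (M / Z) * f p + f p - M / Z * Real.exp (-p.2 ^ 2 / 2)))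
          = M * (Real.log M - Real.log Z) := by
      have e1 : (∫ p in S,
          (Real.log (M / Z) * f p + f p - M / Z * Real.exp (-p.2 ^ 2 / 2)))
            = (∫ p in S, (Real.log (M / Z) * f p + f p))
              - ∫ p in S, M / Z * Real.exp (-p.2 ^ 2 / 2) :=
        integral_sub ((hfL1.const_mul _).add hfL1) (hgaussS.const_mul _)
      have e2 : (∫ p in S, (Real.log (M / Z) * f p + f p))
          = (∫ p in S, Real.log (M / Z) * f p) + ∫ p in S, f p :=
        integral_add (hfL1.const_mul _) hfL1
      have e3 : (∫ p in S, Real.log (M / Z) * f p) = Real.log (M / Z) * M := by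
        rw [integral_const_mul, hmass]
      have e4 : (∫ p in S, M / Z * Real.exp (-p.2 ^ 2 / 2)) = M / Z * Z := by
        rw [integral_const_mul, ← hZ]
      rw [e1, e2, e3, e4, hmass, Real.log_div hM.ne' hZpos.ne']
      field_simp
      ring
    have hRval : (∫ p in S, (j (f p) + p.2 ^ 2 / 2 * f p))
        = (∫ p in S, j (f p)) + ∫ p in S, p.2 ^ 2 / 2 * f p := by
      rw [integral_add hjfint hkin]
    rw [hc]
    have key : M * (Real.log M - Real.log Z)
        ≤ (∫ p in S, j (f p)) + ∫ p in S, p.2 ^ 2 / 2 * f p := by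
      rw [← hRval, ← hLval]; exact hint_le
    nlinarith [hpot, key]
end
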